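/- Let X be a Banach lattice, (x_n) a sequence in X, and x ∈ X. Then (x_n) order converges to x (i.e., there exists a decreasing net (z_μ) with infimum 0 such that for each μ, |x_n − x| ≤ z_μ for all but finitely many n) if and only if for every y > 0 there exists z ∈ X such that y ≰ z and |x_n − x| ≤ z for all but finitely many n. -/

import Mathlib

open Filter

universe u

/-- `(x n)` order converges to `x₀`: there is a decreasing net `(z μ)`, indexed by a
(nonempty, upward directed) preordered set, with infimum `0`, such that for every `μ`,
`|x n − x₀| ≤ z μ` for all but finitely many `n`. -/
def OrderConvergesTo {X : Type u} [Lattice X] [AddCommGroup X] (x : ℕ → X) (x₀ : X) : Prop :=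
  ∃ (ι : Type u) (le : ι → ι → Prop), Nonempty ι ∧
    (∀ a, le a a) ∧ (∀ a b c, le a b → le b c → le a c) ∧
    (∀ a b, ∃ c, le a c ∧ le b c) ∧
    ∃ z : ι → X, (∀ a b, le a b → z b ≤ z a) ∧ IsGLB (Set.range z) 0 ∧
      ∀ μ, ∀ᶠ n in atTop, |x n - x₀| ≤ z μ

/-- In a Banach lattice, `(x n)` order converges to `x₀` iff for every `y > 0`
there is `z` with `y ≰ z` and `|x n − x₀| ≤ z` for all but finitely many `n`. -/
theorem orderConvergesTo_iff {X : Type u} [NormedAddCommGroup X] [Lattice X]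
    [IsOrderedAddMonoid X] [HasSolidNorm X]
    [NormedSpace ℝ X] [CompleteSpace X] (x : ℕ → X) (x₀ : X) :
    OrderConvergesTo x x₀ ↔
      ∀ y : X, 0 < y → ∃ z : X, ¬ y ≤ z ∧ ∀ᶠ n in atTop, |x n - x₀| ≤ z := by
  constructor
  · rintro ⟨ι, le, ⟨a0⟩, hrefl, htrans, hdir, z, hmono, hglb, hbound⟩ y hy
    by_contra hcon
    push_neg at hcon
    have hlb : ∀ μ, y ≤ z μ := by
      intro μ
      by_contra hyz
      exact ((hcon (z μ) hyz).and_eventually (hbound μ)).exists.elim fun n hn => hn.1 hn.2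
    have hy0 : y ≤ 0 := hglb.2 (by rintro w ⟨μ, rfl⟩; exact hlb μ)
    exact absurd (le_antisymm hy0 hy.le) hy.ne'
  · intro h
    set S := {z : X | ∀ᶠ n in atTop, |x n - x₀| ≤ z} with hS
    have hpos : ∀ z ∈ S, 0 ≤ z := by
      intro z hz
      obtain ⟨n, hn⟩ := hz.exists
      exact (abs_nonneg _).trans hn
    have hne : ∃ z, z ∈ S := by
      by_cases hs : ∃ w : X, w ≠ 0
      · obtain ⟨w, hw⟩ := hs
        have hw' : 0 < |w| := by
          refine lt_of_le_of_ne (abs_nonneg w) fun e => hw ?_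
          have h1 : w ≤ 0 := e ▸ le_abs_self w
          have h2 : -w ≤ 0 := e ▸ neg_le_abs w
          exact le_antisymm h1 (neg_nonpos.mp h2)
        obtain ⟨z, -, hz⟩ := h _ hw'
        exact ⟨z, hz⟩
      · push_neg at hs
        exact ⟨0, Eventually.of_forall fun n => by simp [hs]⟩
    refine ⟨{z : X // z ∈ S}, fun a b => (b : X) ≤ a,
      ⟨⟨hne.choose, hne.choose_spec⟩⟩, fun a => le_refl _,
      fun a b c hab hbc => hbc.trans hab, ?_,
      fun a => (a : X), fun a b hab => hab, ⟨?_, ?_⟩, fun μ => μ.2⟩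
    · intro a b
      refine ⟨⟨a ⊓ b, ?_⟩, inf_le_left, inf_le_right⟩
      exact (a.2.and b.2).mono fun n hn => le_inf hn.1 hn.2
    · rintro w ⟨μ, rfl⟩
      exact hpos _ μ.2
    · intro y hy
      by_contra hy0
      have hpos' : 0 < y ⊔ 0 := by
        refine lt_of_le_of_ne le_sup_right fun e => hy0 ?_
        exact sup_eq_right.mp e.symm
      obtain ⟨z, hyz, hz⟩ := h _ hpos'
      exact hyz (sup_le (hy ⟨⟨z, hz⟩, rfl⟩) (hpos z hz))
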